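/- Suppose the set $\mathcal{I}$ of excluded particles is chosen so that $\sum_{i \in \mathcal{I}} |\Gamma_i| \leq C_{diff} h^{n+2} \sum_i |\Gamma_i|$. Combining the consistency estimate and the reduction estimate, the reduced discrete Laplacian satisfies, for every $\varphi \in C^{n+2}$ with bounded derivatives, $|\langle \Delta\omega - \tilde{\Delta}_h\omega, \varphi\rangle| \leq \left(4 C_\alpha \frac{R^{n+2}}{r^2} \max_{|\beta|=n+2}\|D^\beta\varphi\|_\infty + 8 C_{diff} r^{-2} \|\varphi\|_\infty \right) h^n \sum_i |\Gamma_i|$, i.e., the reduction preserves the $O(h^n)$ order of consistency. -/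

import Mathlib

/-- Mixed partial derivative `D^(a,b) φ` of a function on `ℝ²`. -/
noncomputable def pd (a b : ℕ) (φ : ℝ × ℝ → ℝ) : ℝ × ℝ → ℝ :=
  fun p => iteratedDeriv a (fun s => iteratedDeriv b (fun t => φ (s, t)) p.2) p.1

section Aux
open Set Finset

/-- Directional derivative operator. -/
noncomputable def pdv (v : ℝ × ℝ) (f : ℝ × ℝ → ℝ) : ℝ × ℝ → ℝ :=
  fun x => fderiv ℝ f x v

lemma contDiff_pdv {m : ℕ} {f : ℝ × ℝ → ℝ} (hf : ContDiff ℝ ((m + 1 : ℕ)) f) (v : ℝ × ℝ) :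
    ContDiff ℝ (m : ℕ) (pdv v f) := by
  have h1 : ContDiff ℝ (m : ℕ) (fderiv ℝ f) := by
    apply hf.fderiv_right
    norm_cast
  exact h1.clm_apply contDiff_const

lemma contDiff_pdv_iterate {m k : ℕ} {f : ℝ × ℝ → ℝ} (hf : ContDiff ℝ ((m + k : ℕ)) f)
    (v : ℝ × ℝ) : ContDiff ℝ (m : ℕ) ((pdv v)^[k] f) := by
  induction k generalizing f with
  | zero => simpa using hf
  | succ k ih =>
    rw [Function.iterate_succ_apply]
    apply ih
    apply contDiff_pdv
    have : m + k + 1 = m + (k + 1) := by ring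
    rw [this]
    exact hf

lemma hasDerivAt_line {f : ℝ × ℝ → ℝ} {c v : ℝ × ℝ} {t : ℝ}
    (hf : DifferentiableAt ℝ f (c + t • v)) :
    HasDerivAt (fun t : ℝ => f (c + t • v)) (pdv v f (c + t • v)) t := by
  have h1 : HasDerivAt (fun t : ℝ => c + t • v) v t := by
    have := ((hasDerivAt_id t).smul_const v).const_add c
    simpa using this
  have := hf.hasFDerivAt.comp_hasDerivAt t h1
  exact this

lemma iteratedDeriv_line {k m : ℕ} {f : ℝ × ℝ → ℝ} (hf : ContDiff ℝ ((k + m : ℕ)) f)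
    (c v : ℝ × ℝ) (t : ℝ) :
    iteratedDeriv k (fun t : ℝ => f (c + t • v)) t = (pdv v)^[k] f (c + t • v) := by
  induction k generalizing f with
  | zero => simp
  | succ k ih =>
    rw [iteratedDeriv_succ']
    have hd : deriv (fun t : ℝ => f (c + t • v)) = fun t : ℝ => pdv v f (c + t • v) := by
      funext s
      have hdiff : Differentiable ℝ f := by
        apply hf.differentiable
        exact_mod_cast (by omega : k + 1 + m ≠ 0)
      exact (hasDerivAt_line (hdiff _)).deriv
    rw [hd]
    have hf' : ContDiff ℝ ((k + m : ℕ)) (pdv v f) := by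
      apply contDiff_pdv
      have : k + m + 1 = k + 1 + m := by ring
      rw [this]; exact hf
    rw [ih hf', Function.iterate_succ_apply]

lemma pdv_comm {Nn : ℕ} {f : ℝ × ℝ → ℝ} (hf : ContDiff ℝ ((Nn + 2 : ℕ)) f)
    (v w : ℝ × ℝ) (x : ℝ × ℝ) : pdv v (pdv w f) x = pdv w (pdv v f) x := by
  have hsym : IsSymmSndFDerivAt ℝ f x := by
    apply hf.contDiffAt.isSymmSndFDerivAt
    rw [minSmoothness_of_isRCLikeNormedField]
    exact_mod_cast (by omega : 2 ≤ Nn + 2)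
  have hdf : DifferentiableAt ℝ (fderiv ℝ f) x := by
    have h1 : ContDiff ℝ (1 : ℕ) (fderiv ℝ f) := by
      apply hf.fderiv_right
      exact_mod_cast (by omega : 1 + 1 ≤ Nn + 2)
    exact (h1.differentiable (by norm_num)).differentiableAt
  have key : ∀ u : ℝ × ℝ, pdv v (pdv w f) x = fderiv ℝ (fderiv ℝ f) x v w := by
    intro u
    show fderiv ℝ (fun y => (fderiv ℝ f y) w) x v = _
    rw [fderiv_clm_apply hdf (differentiableAt_const w)]
    simp
  have key2 : pdv w (pdv v f) x = fderiv ℝ (fderiv ℝ f) x w v := by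
    show fderiv ℝ (fun y => (fderiv ℝ f y) v) x w = _
    rw [fderiv_clm_apply hdf (differentiableAt_const v)]
    simp
  rw [key 0, key2, hsym.eq]

lemma cd_mono {m M : ℕ} {g : ℝ × ℝ → ℝ} (hg : ContDiff ℝ (M : ℕ) g) (h : m ≤ M) :
    ContDiff ℝ (m : ℕ) g := hg.of_le (by exact_mod_cast h)

lemma pdv_swap_iterate {a : ℕ} {g : ℝ × ℝ → ℝ} (hg : ContDiff ℝ ((a + 1 : ℕ)) g)
    (v w : ℝ × ℝ) : pdv w ((pdv v)^[a] g) = (pdv v)^[a] (pdv w g) := by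
  induction a generalizing g with
  | zero => simp
  | succ a ih =>
    rw [Function.iterate_succ_apply, Function.iterate_succ_apply]
    have h1 : ContDiff ℝ ((a + 1 : ℕ)) (pdv v g) := by
      apply contDiff_pdv
      have : a + 1 + 1 = a + 1 + 1 := rfl
      exact hg
    rw [ih h1]
    have h2 : pdv w (pdv v g) = pdv v (pdv w g) := by
      funext x
      exact pdv_comm (cd_mono hg (by omega) : ContDiff ℝ ((a : ℕ) + 2 : ℕ) g) w v x
    rw [h2]

lemma pdv_single (c d : ℝ) {g h : ℝ × ℝ → ℝ} (hg : DifferentiableAt ℝ g x)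
    (hh : DifferentiableAt ℝ h x) (u : ℝ × ℝ) :
    pdv u (fun y => c * g y + d * h y) x = c * pdv u g x + d * pdv u h x := by
  unfold pdv
  rw [fderiv_fun_add ((hg.const_mul c)) ((hh.const_mul d)), fderiv_const_mul hg, fderiv_const_mul hh]
  simp

lemma pdv_iterate_lin {a : ℕ} {g h : ℝ × ℝ → ℝ} (hg : ContDiff ℝ (a : ℕ) g)
    (hh : ContDiff ℝ (a : ℕ) h) (c d : ℝ) (u : ℝ × ℝ) :
    (pdv u)^[a] (fun y => c * g y + d * h y) = fun x => c * (pdv u)^[a] g x + d * (pdv u)^[a] h x := by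
  induction a generalizing g h with
  | zero => simp
  | succ a ih =>
    rw [Function.iterate_succ_apply, Function.iterate_succ_apply, Function.iterate_succ_apply]
    have hgd : Differentiable ℝ g := hg.differentiable (by simp)
    have hhd : Differentiable ℝ h := hh.differentiable (by simp)
    have h1 : pdv u (fun y => c * g y + d * h y) = fun y => c * pdv u g y + d * pdv u h y := by
      funext y
      exact pdv_single c d (hgd y) (hhd y) u
    rw [h1]
    exact ih (contDiff_pdv hg u) (contDiff_pdv hh u)

lemma pdv_binom {k : ℕ} {f : ℝ × ℝ → ℝ} (hf : ContDiff ℝ (k : ℕ) f) (v : ℝ × ℝ) (x : ℝ × ℝ) :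
    (pdv v)^[k] f x = ∑ a ∈ range (k + 1), (k.choose a : ℝ) * v.1 ^ a * v.2 ^ (k - a) *
      (pdv (1, 0))^[a] ((pdv (0, 1))^[k - a] f) x := by
  induction k generalizing f x with
  | zero => simp
  | succ k ih =>
    have hvf : pdv v f = fun y => v.1 * pdv (1, 0) f y + v.2 * pdv (0, 1) f y := by
      funext y
      show fderiv ℝ f y v = _
      have hv : v = v.1 • ((1 : ℝ), (0 : ℝ)) + v.2 • ((0 : ℝ), (1 : ℝ)) := by
        ext <;> simp
      rw [hv, map_add, map_smul, map_smul]
      simp [pdv]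
    have hfd1 : ContDiff ℝ (k : ℕ) (pdv (1, 0) f) := contDiff_pdv hf _
    have hfd2 : ContDiff ℝ (k : ℕ) (pdv (0, 1) f) := contDiff_pdv hf _
    rw [Function.iterate_succ_apply, ih (contDiff_pdv hf v)]
    have step : ∀ a ∈ range (k + 1),
        ((k.choose a : ℝ)) * v.1 ^ a * v.2 ^ (k - a) *
          (pdv (1, 0))^[a] ((pdv (0, 1))^[k - a] (pdv v f)) x =
        (k.choose a : ℝ) * v.1 ^ a * v.2 ^ (k - a) *
          (v.1 * (pdv (1, 0))^[a + 1] ((pdv (0, 1))^[k - a] f) x +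
           v.2 * (pdv (1, 0))^[a] ((pdv (0, 1))^[k - a + 1] f) x) := by
      intro a ha
      rw [Finset.mem_range] at ha
      have hak : a ≤ k := by omega
      congr 1
      rw [hvf]
      rw [pdv_iterate_lin (cd_mono hfd1 (by omega)) (cd_mono hfd2 (by omega)) v.1 v.2 (0, 1)]
      have hswap : (pdv (0, 1))^[k - a] (pdv (1, 0) f) = pdv (1, 0) ((pdv (0, 1))^[k - a] f) := by
        rw [pdv_swap_iterate (cd_mono hf (by omega) : ContDiff ℝ ((k - a + 1 : ℕ)) f)]
      rw [hswap]
      have hc1 : ContDiff ℝ (a : ℕ) (pdv (1, 0) ((pdv (0, 1))^[k - a] f)) := by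
        rw [← hswap]
        have := contDiff_pdv_iterate (cd_mono hfd1 (by omega : a + (k - a) ≤ k)) ((0, 1) : ℝ × ℝ)
        exact this
      have hc2 : ContDiff ℝ (a : ℕ) ((pdv (0, 1))^[k - a + 1] f) := by
        apply contDiff_pdv_iterate
        exact cd_mono hf (by omega : a + (k - a + 1) ≤ k + 1)
      rw [← Function.iterate_succ_apply (pdv ((0 : ℝ), (1 : ℝ))) (k - a) f]
      rw [pdv_iterate_lin hc1 hc2 v.1 v.2 (1, 0)]
      simp only [← Function.iterate_succ_apply (pdv ((1 : ℝ), (0 : ℝ))) a]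
    rw [Finset.sum_congr rfl step]
    -- now pure algebra with Pascal's rule
    set T : ℕ → ℕ → ℝ := fun a b => (pdv (1, 0))^[a] ((pdv (0, 1))^[b] f) x with hT
    set P : ℕ → ℝ := fun a => v.1 ^ a * v.2 ^ (k + 1 - a) * T a (k + 1 - a) with hP
    have lhs_eq : ∑ a ∈ range (k + 1), (k.choose a : ℝ) * v.1 ^ a * v.2 ^ (k - a) *
        (v.1 * T (a + 1) (k - a) + v.2 * T a (k - a + 1)) =
        (∑ a ∈ range (k + 1), (k.choose a : ℝ) * P (a + 1)) +
        ∑ a ∈ range (k + 1), (k.choose a : ℝ) * P a := by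
      rw [← Finset.sum_add_distrib]
      apply Finset.sum_congr rfl
      intro a ha
      rw [Finset.mem_range] at ha
      have h1 : k + 1 - (a + 1) = k - a := by omega
      have h2 : k + 1 - a = k - a + 1 := by omega
      simp only [hP, h1, h2]
      ring
    rw [lhs_eq]
    have rhs_eq : ∑ a ∈ range (k + 2), ((k + 1).choose a : ℝ) * v.1 ^ a * v.2 ^ (k + 1 - a) *
        T a (k + 1 - a) = ∑ a ∈ range (k + 2), ((k + 1).choose a : ℝ) * P a := by
      apply Finset.sum_congr rfl
      intro a _
      simp only [hP]; ring
    rw [rhs_eq]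
    rw [Finset.sum_range_succ' (fun a => ((k + 1).choose a : ℝ) * P a) (k + 1)]
    have hsplit : ∀ a ∈ range (k + 1), ((k + 1).choose (a + 1) : ℝ) * P (a + 1) =
        (k.choose a : ℝ) * P (a + 1) + (k.choose (a + 1) : ℝ) * P (a + 1) := by
      intro a _
      rw [Nat.choose_succ_succ]
      push_cast
      ring
    rw [Finset.sum_congr rfl hsplit, Finset.sum_add_distrib]
    have last_eq : ∑ a ∈ range (k + 1), (k.choose a : ℝ) * P a =
        (∑ a ∈ range (k + 1), (k.choose (a + 1) : ℝ) * P (a + 1)) + ((k + 1).choose 0 : ℝ) * P 0 := by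
      rw [Finset.sum_range_succ' (fun a => (k.choose a : ℝ) * P a) k]
      rw [Finset.sum_range_succ (fun a => (k.choose (a + 1) : ℝ) * P (a + 1)) k]
      simp [Nat.choose_succ_self]
    rw [last_eq]
    ring

lemma pd_eq_pdv {a b m : ℕ} {φ : ℝ × ℝ → ℝ} (hφ : ContDiff ℝ ((a + b + m : ℕ)) φ)
    (p : ℝ × ℝ) : pd a b φ p = (pdv (1, 0))^[a] ((pdv (0, 1))^[b] φ) p := by
  have inner : ∀ s t0 : ℝ, iteratedDeriv b (fun t => φ (s, t)) t0 =
      (pdv (0, 1))^[b] φ (s, t0) := by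
    intro s t0
    have h1 : (fun t => φ (s, t)) = fun t : ℝ => φ ((s, 0) + t • ((0 : ℝ), (1 : ℝ))) := by
      funext t
      congr 1
      ext <;> simp
    rw [h1, iteratedDeriv_line (m := a + m)
      (by rw [show b + (a + m) = a + b + m by ring]; exact hφ) (s, 0) (0, 1) t0]
    have : (s, 0) + t0 • ((0 : ℝ), (1 : ℝ)) = (s, t0) := by ext <;> simp
    rw [this]
  have houter : (fun s => iteratedDeriv b (fun t => φ (s, t)) p.2) =
      fun s : ℝ => (pdv (0, 1))^[b] φ ((0, p.2) + s • ((1 : ℝ), (0 : ℝ))) := by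
    funext s
    rw [inner s p.2]
    have : (0, p.2) + s • ((1 : ℝ), (0 : ℝ)) = (s, p.2) := by ext <;> simp
    rw [this]
  have hG : ContDiff ℝ ((a + m : ℕ)) ((pdv (0, 1))^[b] φ) := by
    apply contDiff_pdv_iterate
    rw [show a + m + b = a + b + m by ring]; exact hφ
  unfold pd
  rw [houter, iteratedDeriv_line (m := m) (by rw [show a + m = a + m by ring]; exact hG)
    (0, p.2) (1, 0) p.1]
  have : (0, p.2) + p.1 • ((1 : ℝ), (0 : ℝ)) = p := by ext <;> simp
  rw [this]

lemma iteratedDerivWithin_eq_iteratedDeriv' {K k : ℕ} {g : ℝ → ℝ} (hg : ContDiff ℝ (K : ℕ) g)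
    (hk : k ≤ K) {s : Set ℝ} (hs : UniqueDiffOn ℝ s) :
    ∀ x ∈ s, iteratedDerivWithin k g s x = iteratedDeriv k g x := by
  induction k with
  | zero => intro x _; simp
  | succ k ih =>
    intro x hx
    rw [iteratedDerivWithin_succ]
    have h1 : derivWithin (iteratedDerivWithin k g s) s x =
        derivWithin (iteratedDeriv k g) s x :=
      derivWithin_congr (fun y hy => ih (by omega) y hy) (ih (by omega) x hx)
    rw [h1]
    rw [(((hg.differentiable_iteratedDeriv k
      (by exact_mod_cast (by omega : k < K))).differentiableAt (x := x))).derivWithin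
      (hs.uniqueDiffWithinAt hx)]
    rw [iteratedDeriv_succ]

lemma taylor_est {n : ℕ} {φ : ℝ × ℝ → ℝ} (hφ : ContDiff ℝ ((n + 2 : ℕ)) φ) {M : ℝ}
    (hM : ∀ a b : ℕ, a + b = n + 2 → ∀ p, |pd a b φ p| ≤ M)
    (p0 v : ℝ × ℝ) {D : ℝ} (hD1 : |v.1| ≤ D) (hD2 : |v.2| ≤ D) :
    |φ (p0 + v) - ∑ k ∈ range (n + 2), ∑ a ∈ range (k + 1),
        (1 / ((a.factorial : ℝ) * ((k - a).factorial))) * v.1 ^ a * v.2 ^ (k - a) *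
          pd a (k - a) φ p0| ≤
      (∑ a ∈ range (n + 3), 1 / ((a.factorial : ℝ) * ((n + 2 - a).factorial))) * M * D ^ (n + 2) := by
  have hM0 : 0 ≤ M := le_trans (abs_nonneg _) (hM 0 (n + 2) (by omega) p0)
  have hD0 : 0 ≤ D := le_trans (abs_nonneg _) hD1
  set g : ℝ → ℝ := fun t => φ (p0 + t • v) with hgdef
  have hline : ContDiff ℝ ((n + 2 : ℕ)) (fun t : ℝ => p0 + t • v) :=
    contDiff_const.add (contDiff_id.smul contDiff_const)
  have hg : ContDiff ℝ ((n + 2 : ℕ)) g := hφ.comp hline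
  -- derivative values of g
  have hval : ∀ k, k ≤ n + 2 → ∀ t : ℝ, iteratedDeriv k g t =
      ∑ a ∈ range (k + 1), (k.choose a : ℝ) * v.1 ^ a * v.2 ^ (k - a) *
        pd a (k - a) φ (p0 + t • v) := by
    intro k hk t
    have h1 : iteratedDeriv k g t = (pdv v)^[k] φ (p0 + t • v) := by
      apply iteratedDeriv_line (m := n + 2 - k)
      rw [show k + (n + 2 - k) = n + 2 by omega]; exact hφ
    rw [h1, pdv_binom (cd_mono hφ (by omega)) v (p0 + t • v)]
    apply Finset.sum_congr rfl
    intro a ha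
    rw [Finset.mem_range] at ha
    rw [pd_eq_pdv (m := n + 2 - k)
      (by rw [show a + (k - a) + (n + 2 - k) = n + 2 by omega]; exact hφ) (p0 + t • v)]
  have h01 : (0 : ℝ) < 1 := zero_lt_one
  have hIcc : UniqueDiffOn ℝ (Icc (0 : ℝ) 1) := uniqueDiffOn_Icc h01
  have hcont : ContDiffOn ℝ ((n + 1 : ℕ)) g (Icc 0 1) :=
    (hg.of_le (by exact_mod_cast (by omega : n + 1 ≤ n + 2))).contDiffOn
  have hdiff : DifferentiableOn ℝ (iteratedDerivWithin (n + 1) g (Icc 0 1)) (Ioo 0 1) := by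
    have base : DifferentiableOn ℝ (iteratedDeriv (n + 1) g) (Ioo 0 1) :=
      (hg.differentiable_iteratedDeriv (n + 1)
        (by exact_mod_cast (by omega : n + 1 < n + 2))).differentiableOn
    exact base.congr fun y hy =>
      iteratedDerivWithin_eq_iteratedDeriv' hg (by omega) hIcc y (Ioo_subset_Icc_self hy)
  obtain ⟨ξ, hξ, heq⟩ := taylor_mean_remainder_lagrange (n := n + 1) h01.ne
    (by rwa [uIcc_of_le h01.le]) (by rwa [uIcc_of_le h01.le, uIoo_of_le h01.le])
  rw [uIoo_of_le h01.le] at hξ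
  rw [uIcc_of_le h01.le] at heq
  have hξI : ξ ∈ Icc (0 : ℝ) 1 := Ioo_subset_Icc_self hξ
  -- identify the Taylor polynomial
  have htay : taylorWithinEval g (n + 1) (Icc 0 1) 0 1 =
      ∑ k ∈ range (n + 2), ∑ a ∈ range (k + 1),
        (1 / ((a.factorial : ℝ) * ((k - a).factorial))) * v.1 ^ a * v.2 ^ (k - a) *
          pd a (k - a) φ p0 := by
    rw [taylor_within_apply]
    apply Finset.sum_congr rfl
    intro k hk
    rw [Finset.mem_range] at hk
    rw [iteratedDerivWithin_eq_iteratedDeriv' hg (by omega) hIcc 0 (by simp)]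
    rw [hval k (by omega) 0]
    rw [Finset.smul_sum]
    apply Finset.sum_congr rfl
    intro a ha
    rw [Finset.mem_range] at ha
    have hfact : ((k.choose a : ℝ)) * a.factorial * (k - a).factorial = k.factorial := by
      exact_mod_cast Nat.choose_mul_factorial_mul_factorial (by omega : a ≤ k)
    have hk0 : (k.factorial : ℝ) ≠ 0 := Nat.cast_ne_zero.2 k.factorial_ne_zero
    have ha0 : (a.factorial : ℝ) ≠ 0 := Nat.cast_ne_zero.2 a.factorial_ne_zero
    have hb0 : ((k - a).factorial : ℝ) ≠ 0 := Nat.cast_ne_zero.2 (k - a).factorial_ne_zero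
    have h2 : ((k.factorial : ℝ))⁻¹ * (k.choose a : ℝ) =
        1 / ((a.factorial : ℝ) * ((k - a).factorial : ℝ)) := by
      field_simp
      linear_combination hfact
    have hp0 : p0 + (0 : ℝ) • v = p0 := by simp
    rw [hp0, smul_eq_mul, sub_zero, one_pow, mul_one]
    linear_combination (v.1 ^ a * v.2 ^ (k - a) * pd a (k - a) φ p0) * h2
  -- the remainder
  have hg1 : g 1 = φ (p0 + v) := by simp [hgdef]
  have hrem : iteratedDerivWithin (n + 2) g (Icc 0 1) ξ = iteratedDeriv (n + 2) g ξ :=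
    iteratedDerivWithin_eq_iteratedDeriv' hg le_rfl hIcc ξ hξI
  rw [hg1, htay, show n + 1 + 1 = n + 2 from rfl, hrem, sub_zero, one_pow, mul_one] at heq
  rw [heq, abs_div, Nat.abs_cast]
  have hfpos : (0 : ℝ) < ((n + 2).factorial : ℝ) := by
    exact_mod_cast (n + 2).factorial_pos
  rw [div_le_iff₀ hfpos]
  have boundsum : |iteratedDeriv (n + 2) g ξ| ≤
      ∑ a ∈ range (n + 3), (((n + 2).choose a : ℝ)) * (D ^ (n + 2) * M) := by
    rw [hval (n + 2) le_rfl ξ]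
    refine (Finset.abs_sum_le_sum_abs _ _).trans (Finset.sum_le_sum ?_)
    intro a ha
    rw [Finset.mem_range] at ha
    have h1 : |(((n + 2).choose a : ℝ)) * v.1 ^ a * v.2 ^ (n + 2 - a) *
        pd a (n + 2 - a) φ (p0 + ξ • v)| = (((n + 2).choose a : ℝ)) *
        (|v.1| ^ a * (|v.2| ^ (n + 2 - a) * |pd a (n + 2 - a) φ (p0 + ξ • v)|)) := by
      rw [abs_mul, abs_mul, abs_mul, abs_pow, abs_pow, Nat.abs_cast]
      ring
    rw [h1]
    apply mul_le_mul_of_nonneg_left _ (by positivity)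
    have hstep : |v.1| ^ a * (|v.2| ^ (n + 2 - a) * |pd a (n + 2 - a) φ (p0 + ξ • v)|) ≤
        D ^ a * (D ^ (n + 2 - a) * M) := by
      have hh1 : |v.1| ^ a ≤ D ^ a := pow_le_pow_left₀ (abs_nonneg _) hD1 a
      have hh2 : |v.2| ^ (n + 2 - a) ≤ D ^ (n + 2 - a) := pow_le_pow_left₀ (abs_nonneg _) hD2 _
      have hh3 : |pd a (n + 2 - a) φ (p0 + ξ • v)| ≤ M := hM a (n + 2 - a) (by omega) _
      exact mul_le_mul hh1 (mul_le_mul hh2 hh3 (abs_nonneg _) (by positivity))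
        (by positivity) (by positivity)
    refine hstep.trans (le_of_eq ?_)
    rw [← mul_assoc, ← pow_add, show a + (n + 2 - a) = n + 2 by omega]
  refine boundsum.trans (le_of_eq ?_)
  rw [Finset.sum_mul, Finset.sum_mul, Finset.sum_mul]
  apply Finset.sum_congr rfl
  intro a ha
  rw [Finset.mem_range] at ha
  have hfact : (((n + 2).choose a : ℝ)) * a.factorial * (n + 2 - a).factorial =
      (n + 2).factorial := by
    exact_mod_cast Nat.choose_mul_factorial_mul_factorial (by omega : a ≤ n + 2)
  have ha0 : (a.factorial : ℝ) ≠ 0 := Nat.cast_ne_zero.2 a.factorial_ne_zero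
  have hb0 : ((n + 2 - a).factorial : ℝ) ≠ 0 := Nat.cast_ne_zero.2 (n + 2 - a).factorial_ne_zero
  field_simp
  linear_combination (M * D ^ (n + 2)) * hfact

end Aux



open Set Finset in
/-- The reduced discrete Laplacian retains the `O(hⁿ)` order of
consistency when the excluded circulation satisfies
`∑_{i∈I} |Γ_i| ≤ C_diff h^{n+2} ∑_i |Γ_i|`. -/
theorem stmt_19 {N : ℕ} (n : ℕ) (hn : n = 1 ∨ n = 2)
    (x : Fin N → ℝ × ℝ) (f : Fin N → Fin N → ℝ) (Γ : Fin N → ℝ)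
    (I : Finset (Fin N)) (Cdiff : ℝ) (hCdiff : 0 < Cdiff)
    (r R h : ℝ) (hr : 0 < r) (hR : 0 < R) (hh : 0 < h)
    (hI : ∑ i ∈ I, |Γ i| ≤ Cdiff * h^(n + 2) * ∑ i, |Γ i|)
    (φ : ℝ × ℝ → ℝ) (hφ : ContDiff ℝ (n + 2 : ℕ) φ)
    (M : ℝ) (hM : ∀ a b : ℕ, a + b = n + 2 → ∀ p, |pd a b φ p| ≤ M)
    (B : ℝ) (hB : ∀ p, |φ p| ≤ B)
    (hmom : ∀ i, ∀ a b : ℕ, a + b ≤ n + 1 → a + b ≠ 2 →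
      ∑ j, f i j * ((x j).1 - (x i).1)^a * ((x j).2 - (x i).2)^b = 0)
    (hxx : ∀ i, ∑ j, f i j * ((x j).1 - (x i).1)^2 = 2)
    (hyy : ∀ i, ∑ j, f i j * ((x j).2 - (x i).2)^2 = 2)
    (hxy : ∀ i, ∑ j, f i j * (((x j).1 - (x i).1) * ((x j).2 - (x i).2)) = 0)
    (hnonneg : ∀ i j, j ≠ i → 0 ≤ f i j)
    (hsupp : ∀ i j, j ≠ i → f i j ≠ 0 →
      r * h ≤ Real.sqrt (((x j).1 - (x i).1)^2 + ((x j).2 - (x i).2)^2) ∧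
      Real.sqrt (((x j).1 - (x i).1)^2 + ((x j).2 - (x i).2)^2) ≤ R * h) :
    |∑ i, Γ i * (pd 2 0 φ (x i) + pd 0 2 φ (x i)) -
        ∑ i ∈ Finset.univ \ I, ∑ j, Γ i * f i j * φ (x j)| ≤
      (4 * (∑ a ∈ Finset.range (n + 3),
              1 / ((a.factorial : ℝ) * ((n + 2 - a).factorial))) *
          (R^(n + 2) / r^2) * M +
        8 * Cdiff / r^2 * B) * h^n * ∑ i, |Γ i| := by
  have hM0 : 0 ≤ M := le_trans (abs_nonneg _) (hM 0 (n + 2) (by omega) (0, 0))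
  have hB0 : 0 ≤ B := le_trans (abs_nonneg _) (hB (0, 0))
  set Cα : ℝ := ∑ a ∈ Finset.range (n + 3),
      1 / ((a.factorial : ℝ) * ((n + 2 - a).factorial)) with hCα
  have hCα0 : 0 ≤ Cα := Finset.sum_nonneg fun a _ => by positivity
  -- row sums of the stencil off the diagonal
  have hsum_f : ∀ i, ∑ j ∈ Finset.univ.erase i, f i j ≤ 4 / (r ^ 2 * h ^ 2) := by
    intro i
    have hpos : (0 : ℝ) < r ^ 2 * h ^ 2 := by positivity
    rw [le_div_iff₀ hpos]
    have key : (∑ j ∈ Finset.univ.erase i, f i j) * (r ^ 2 * h ^ 2) ≤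
        ∑ j ∈ Finset.univ.erase i,
          f i j * (((x j).1 - (x i).1) ^ 2 + ((x j).2 - (x i).2) ^ 2) := by
      rw [Finset.sum_mul]
      apply Finset.sum_le_sum
      intro j hj
      have hji : j ≠ i := Finset.ne_of_mem_erase hj
      rcases eq_or_ne (f i j) 0 with h0 | h0
      · simp [h0]
      · have hs := (hsupp i j hji h0).1
        have hnn : (0 : ℝ) ≤ ((x j).1 - (x i).1) ^ 2 + ((x j).2 - (x i).2) ^ 2 := by positivity
        have h2 : r ^ 2 * h ^ 2 ≤ ((x j).1 - (x i).1) ^ 2 + ((x j).2 - (x i).2) ^ 2 := by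
          nlinarith [Real.sq_sqrt hnn, Real.sqrt_nonneg
            (((x j).1 - (x i).1) ^ 2 + ((x j).2 - (x i).2) ^ 2), mul_pos hr hh]
        have hf0 := hnonneg i j hji
        nlinarith
    have key2 : ∑ j ∈ Finset.univ.erase i,
        f i j * (((x j).1 - (x i).1) ^ 2 + ((x j).2 - (x i).2) ^ 2) = 4 := by
      have h3 : ∑ j, f i j * (((x j).1 - (x i).1) ^ 2 + ((x j).2 - (x i).2) ^ 2) = 4 := by
        simp_rw [mul_add, Finset.sum_add_distrib]
        rw [hxx i, hyy i]; norm_num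
      rw [← Finset.add_sum_erase _ _ (Finset.mem_univ i)] at h3
      simpa using h3
    linarith
  -- consistency of the full stencil
  have consist : ∀ i, |(pd 2 0 φ (x i) + pd 0 2 φ (x i)) - ∑ j, f i j * φ (x j)| ≤
      4 * Cα * (R ^ (n + 2) / r ^ 2) * M * h ^ n := by
    intro i
    set P : Fin N → ℝ := fun j => ∑ k ∈ range (n + 2), ∑ a ∈ range (k + 1),
      (1 / ((a.factorial : ℝ) * ((k - a).factorial))) * ((x j).1 - (x i).1) ^ a *
        ((x j).2 - (x i).2) ^ (k - a) * pd a (k - a) φ (x i) with hP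
    have htay : ∀ j, j ≠ i → f i j ≠ 0 → |φ (x j) - P j| ≤ Cα * M * (R * h) ^ (n + 2) := by
      intro j hji h0
      have hs := hsupp i j hji h0
      have hnn : (0 : ℝ) ≤ ((x j).1 - (x i).1) ^ 2 + ((x j).2 - (x i).2) ^ 2 := by positivity
      have hD1 : |(x j - x i).1| ≤ R * h := by
        rw [Prod.fst_sub, ← Real.sqrt_sq_eq_abs]
        exact le_trans (Real.sqrt_le_sqrt (by nlinarith [sq_nonneg ((x j).2 - (x i).2)])) hs.2
      have hD2 : |(x j - x i).2| ≤ R * h := by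
        rw [Prod.snd_sub, ← Real.sqrt_sq_eq_abs]
        exact le_trans (Real.sqrt_le_sqrt (by nlinarith [sq_nonneg ((x j).1 - (x i).1)])) hs.2
      have := taylor_est hφ hM (x i) (x j - x i) hD1 hD2
      rw [show x i + (x j - x i) = x j by abel] at this
      simpa only [Prod.fst_sub, Prod.snd_sub, hP] using this
    have hPi : P i = φ (x i) := by
      have pd00 : pd 0 0 φ (x i) = φ (x i) := by simp [pd]
      simp only [hP, sub_self]
      rw [Finset.sum_eq_single_of_mem 0 (Finset.mem_range.2 (by omega : (0 : ℕ) < n + 2))]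
      · simp [pd00, Nat.factorial]
      · intro k hk hkne
        apply Finset.sum_eq_zero
        intro a ha
        rcases Nat.eq_zero_or_pos a with ha0 | ha0
        · subst ha0
          rw [zero_pow (by omega : k - 0 ≠ 0)]
          ring
        · rw [zero_pow (by omega : a ≠ 0)]
          ring
    have hmain : ∑ j, f i j * P j = pd 2 0 φ (x i) + pd 0 2 φ (x i) := by
      have swap : ∑ j, f i j * P j = ∑ k ∈ range (n + 2), ∑ a ∈ range (k + 1),
          (1 / ((a.factorial : ℝ) * ((k - a).factorial))) * pd a (k - a) φ (x i) *
            ∑ j, f i j * ((x j).1 - (x i).1) ^ a * ((x j).2 - (x i).2) ^ (k - a) := by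
        simp_rw [hP, Finset.mul_sum]
        rw [Finset.sum_comm]
        refine Finset.sum_congr rfl fun k hk => ?_
        rw [Finset.sum_comm]
        refine Finset.sum_congr rfl fun a ha => ?_
        exact Finset.sum_congr rfl fun j hj => by ring
      rw [swap]
      rw [Finset.sum_eq_single_of_mem 2 (Finset.mem_range.2 (by omega))]
      · have e1 : ∑ j, f i j * ((x j).1 - (x i).1) * ((x j).2 - (x i).2) = 0 := by
          rw [← hxy i]; exact Finset.sum_congr rfl fun j _ => by ring
        rw [Finset.sum_range_succ, Finset.sum_range_succ, Finset.sum_range_one]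
        simp only [show (2 : ℕ) - 0 = 2 from rfl, show (2 : ℕ) - 1 = 1 from rfl,
          show (2 : ℕ) - 2 = 0 from rfl, pow_zero, pow_one, mul_one, one_mul]
        rw [hyy i, e1, hxx i]
        norm_num [Nat.factorial]
        ring
      · intro k hk hne
        apply Finset.sum_eq_zero
        intro a ha
        rw [Finset.mem_range] at hk ha
        rw [hmom i a (k - a) (by omega) (by omega), mul_zero]
    have hTsplit : ∑ j, f i j * φ (x j) = (pd 2 0 φ (x i) + pd 0 2 φ (x i)) +
        ∑ j, f i j * (φ (x j) - P j) := by
      rw [← hmain, ← Finset.sum_add_distrib]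
      exact Finset.sum_congr rfl fun j _ => by ring
    rw [hTsplit]
    rw [show (pd 2 0 φ (x i) + pd 0 2 φ (x i)) -
        ((pd 2 0 φ (x i) + pd 0 2 φ (x i)) + ∑ j, f i j * (φ (x j) - P j)) =
        -(∑ j, f i j * (φ (x j) - P j)) by ring, abs_neg]
    have hE : |∑ j, f i j * (φ (x j) - P j)| ≤
        (∑ j ∈ Finset.univ.erase i, f i j) * (Cα * M * (R * h) ^ (n + 2)) := by
      rw [← Finset.add_sum_erase _ (fun j => f i j * (φ (x j) - P j)) (Finset.mem_univ i)]
      rw [hPi, sub_self, mul_zero, zero_add, Finset.sum_mul]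
      refine (Finset.abs_sum_le_sum_abs _ _).trans (Finset.sum_le_sum ?_)
      intro j hj
      have hji : j ≠ i := Finset.ne_of_mem_erase hj
      rcases eq_or_ne (f i j) 0 with h0 | h0
      · simp [h0]
      · rw [abs_mul, abs_of_nonneg (hnonneg i j hji)]
        exact mul_le_mul_of_nonneg_left (htay j hji h0) (hnonneg i j hji)
    refine hE.trans ?_
    have hb0 : (0 : ℝ) ≤ Cα * M * (R * h) ^ (n + 2) := by positivity
    refine (mul_le_mul_of_nonneg_right (hsum_f i) hb0).trans (le_of_eq ?_)
    have hpow : (R * h) ^ (n + 2) = R ^ (n + 2) * (h ^ n * h ^ 2) := by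
      rw [mul_pow]; ring
    rw [hpow]
    field_simp
  -- reduction bound
  have reduce : ∀ i, |∑ j, f i j * φ (x j)| ≤ 4 / (r ^ 2 * h ^ 2) * (2 * B) := by
    intro i
    have hsum0 : ∑ j, f i j = 0 := by
      have := hmom i 0 0 (by omega) (by omega)
      rw [← this]
      exact Finset.sum_congr rfl fun j _ => by ring
    have hT : ∑ j, f i j * φ (x j) = ∑ j, f i j * (φ (x j) - φ (x i)) := by
      simp_rw [mul_sub]
      rw [Finset.sum_sub_distrib, ← Finset.sum_mul, hsum0, zero_mul, sub_zero]
    rw [hT]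
    have hE : |∑ j, f i j * (φ (x j) - φ (x i))| ≤
        (∑ j ∈ Finset.univ.erase i, f i j) * (2 * B) := by
      rw [← Finset.add_sum_erase _ (fun j => f i j * (φ (x j) - φ (x i))) (Finset.mem_univ i)]
      rw [sub_self, mul_zero, zero_add, Finset.sum_mul]
      refine (Finset.abs_sum_le_sum_abs _ _).trans (Finset.sum_le_sum ?_)
      intro j hj
      have hji : j ≠ i := Finset.ne_of_mem_erase hj
      rw [abs_mul, abs_of_nonneg (hnonneg i j hji)]
      refine mul_le_mul_of_nonneg_left ?_ (hnonneg i j hji)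
      calc |φ (x j) - φ (x i)| ≤ |φ (x j)| + |φ (x i)| := abs_sub _ _
        _ ≤ 2 * B := by linarith [hB (x j), hB (x i)]
    exact hE.trans (mul_le_mul_of_nonneg_right (hsum_f i) (by linarith))
  -- assembly
  have hsplit : ∑ i ∈ Finset.univ \ I, ∑ j, Γ i * f i j * φ (x j) =
      (∑ i, ∑ j, Γ i * f i j * φ (x j)) - ∑ i ∈ I, ∑ j, Γ i * f i j * φ (x j) := by
    rw [eq_sub_iff_add_eq]
    exact Finset.sum_sdiff (Finset.subset_univ I)
  rw [hsplit]
  have hGT : ∀ i, ∑ j, Γ i * f i j * φ (x j) = Γ i * ∑ j, f i j * φ (x j) := by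
    intro i
    rw [Finset.mul_sum]
    exact Finset.sum_congr rfl fun j _ => by ring
  simp_rw [hGT]
  have habs : |∑ i, Γ i * (pd 2 0 φ (x i) + pd 0 2 φ (x i)) -
      ((∑ i, Γ i * ∑ j, f i j * φ (x j)) - ∑ i ∈ I, Γ i * ∑ j, f i j * φ (x j))| ≤
      |∑ i, Γ i * ((pd 2 0 φ (x i) + pd 0 2 φ (x i)) - ∑ j, f i j * φ (x j))| +
      |∑ i ∈ I, Γ i * ∑ j, f i j * φ (x j)| := by
    have h2 : ∑ i, Γ i * (pd 2 0 φ (x i) + pd 0 2 φ (x i)) -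
        ∑ i, Γ i * ∑ j, f i j * φ (x j) =
        ∑ i, Γ i * ((pd 2 0 φ (x i) + pd 0 2 φ (x i)) - ∑ j, f i j * φ (x j)) := by
      rw [← Finset.sum_sub_distrib]
      exact Finset.sum_congr rfl fun i _ => by ring
    have h1 : ∑ i, Γ i * (pd 2 0 φ (x i) + pd 0 2 φ (x i)) -
        ((∑ i, Γ i * ∑ j, f i j * φ (x j)) - ∑ i ∈ I, Γ i * ∑ j, f i j * φ (x j)) =
        (∑ i, Γ i * ((pd 2 0 φ (x i) + pd 0 2 φ (x i)) - ∑ j, f i j * φ (x j))) +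
        ∑ i ∈ I, Γ i * ∑ j, f i j * φ (x j) := by
      rw [← h2]; ring
    rw [h1]
    exact abs_add_le _ _
  refine habs.trans ?_
  have hb1 : |∑ i, Γ i * ((pd 2 0 φ (x i) + pd 0 2 φ (x i)) - ∑ j, f i j * φ (x j))| ≤
      (4 * Cα * (R ^ (n + 2) / r ^ 2) * M * h ^ n) * ∑ i, |Γ i| := by
    rw [Finset.mul_sum]
    refine (Finset.abs_sum_le_sum_abs _ _).trans (Finset.sum_le_sum ?_)
    intro i _
    rw [abs_mul]
    calc |Γ i| * |(pd 2 0 φ (x i) + pd 0 2 φ (x i)) - ∑ j, f i j * φ (x j)| ≤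
        |Γ i| * (4 * Cα * (R ^ (n + 2) / r ^ 2) * M * h ^ n) :=
          mul_le_mul_of_nonneg_left (consist i) (abs_nonneg _)
      _ = 4 * Cα * (R ^ (n + 2) / r ^ 2) * M * h ^ n * |Γ i| := by ring
  have hb2 : |∑ i ∈ I, Γ i * ∑ j, f i j * φ (x j)| ≤
      (4 / (r ^ 2 * h ^ 2) * (2 * B)) * ∑ i ∈ I, |Γ i| := by
    rw [Finset.mul_sum]
    refine (Finset.abs_sum_le_sum_abs _ _).trans (Finset.sum_le_sum ?_)
    intro i _
    rw [abs_mul]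
    calc |Γ i| * |∑ j, f i j * φ (x j)| ≤ |Γ i| * (4 / (r ^ 2 * h ^ 2) * (2 * B)) :=
        mul_le_mul_of_nonneg_left (reduce i) (abs_nonneg _)
      _ = 4 / (r ^ 2 * h ^ 2) * (2 * B) * |Γ i| := by ring
  have hb2' : (4 / (r ^ 2 * h ^ 2) * (2 * B)) * ∑ i ∈ I, |Γ i| ≤
      (4 / (r ^ 2 * h ^ 2) * (2 * B)) * (Cdiff * h ^ (n + 2) * ∑ i, |Γ i|) :=
    mul_le_mul_of_nonneg_left hI (by positivity)
  have hfinal : (4 * Cα * (R ^ (n + 2) / r ^ 2) * M * h ^ n) * (∑ i, |Γ i|) +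
      (4 / (r ^ 2 * h ^ 2) * (2 * B)) * (Cdiff * h ^ (n + 2) * ∑ i, |Γ i|) =
      (4 * Cα * (R ^ (n + 2) / r ^ 2) * M + 8 * Cdiff / r ^ 2 * B) * h ^ n * ∑ i, |Γ i| := by
    have hpow : h ^ (n + 2) = h ^ n * h ^ 2 := by ring
    rw [hpow]
    field_simp
    ring
  linarith [hb1, hb2, hb2']
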